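/- Suppose T* is an optimal overlapping testing regime and there exist distinct tests t*_{j'}, t*_j with j' < j such that every individual in t*_{j'} \ t*_j is healthy with probability 1. Then the regime obtained by replacing t*_j with t*_j \ t*_{j'} (keeping other tests) has welfare at least that of T*. -/

import Mathlib

open Finset

/-- Probability of a health realization `ω` (true = healthy) under independent
healthy-probabilities `q`. -/
noncomputable def healthProb {n : ℕ} (q : Fin n → ℝ) (ω : Fin n → Bool) : ℝ :=
  ∏ i, if ω i then q i else 1 - q i

/-- Probability that individual `i` lies in at least one negative test of the regime `T`. -/
noncomputable def inNegProb {n B : ℕ} (q : Fin n → ℝ) (T : Fin B → Finset (Fin n))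
    (i : Fin n) : ℝ :=
  ∑ ω : Fin n → Bool,
    if ∃ j, i ∈ T j ∧ ∀ k ∈ T j, ω k = true then healthProb q ω else 0

/-- Expected welfare of a (possibly overlapping) testing regime `T`. -/
noncomputable def welfare {n B : ℕ} (q u : Fin n → ℝ) (T : Fin B → Finset (Fin n)) : ℝ :=
  ∑ i, u i * inNegProb q T i

/-- Stand-alone expected welfare of a single pooled test `t`. -/
noncomputable def testWelfare {n : ℕ} (q u : Fin n → ℝ) (t : Finset (Fin n)) : ℝ :=
  (∏ i ∈ t, q i) * ∑ i ∈ t, u i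

/-- Welfare of a non-overlapping testing regime, as a sum of stand-alone test welfares. -/
noncomputable def noWelfare {n B : ℕ} (q u : Fin n → ℝ) (T : Fin B → Finset (Fin n)) : ℝ :=
  ∑ j, testWelfare q u (T j)

/-- Probability that test `T j` is pivotal for individual `i`: `i ∈ T j`, test `T j` is
negative, and every earlier test containing `i` is positive. -/
noncomputable def pivotalProb {n B : ℕ} (q : Fin n → ℝ) (T : Fin B → Finset (Fin n))
    (i : Fin n) (j : Fin B) : ℝ :=
  ∑ ω : Fin n → Bool,
    if i ∈ T j ∧ (∀ k ∈ T j, ω k = true) ∧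
        (∀ j' : Fin B, j' < j → i ∈ T j' → ∃ k ∈ T j', ω k = false)
      then healthProb q ω else 0


/-- If `T*` is an optimal (possibly overlapping) regime with two distinct tests
`T* j'`, `T* j` (with `j' < j`) such that every individual in `T* j' \ T* j` is healthy
with probability 1, then replacing `T* j` by `T* j \ T* j'` yields a regime with welfare
at least that of `T*`. -/
theorem stmt10 {n B G : ℕ} (q u : Fin n → ℝ)
    (hq : ∀ i, 0 ≤ q i ∧ q i ≤ 1) (hu : ∀ i, 0 ≤ u i)
    (Tstar : Fin B → Finset (Fin n)) (hsize : ∀ j, (Tstar j).card ≤ G)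
    (hopt : ∀ T : Fin B → Finset (Fin n), (∀ j, (T j).card ≤ G) →
      welfare q u T ≤ welfare q u Tstar)
    (j' j : Fin B) (hlt : j' < j) (hne : Tstar j' ≠ Tstar j)
    (hsure : ∀ i ∈ Tstar j' \ Tstar j, q i = 1) :
    welfare q u Tstar ≤
      welfare q u (Function.update Tstar j (Tstar j \ Tstar j')) := by
  have hne' : j' ≠ j := ne_of_lt hlt
  have hprob_nonneg : ∀ ω : Fin n → Bool, 0 ≤ healthProb q ω := by
    intro ω
    apply Finset.prod_nonneg
    intro k _
    split
    · exact (hq k).1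
    · linarith [(hq k).2]
  unfold welfare
  apply Finset.sum_le_sum
  intro i _
  apply mul_le_mul_of_nonneg_left _ (hu i)
  unfold inNegProb
  apply Finset.sum_le_sum
  intro ω _
  set T' := Function.update Tstar j (Tstar j \ Tstar j') with hT'
  by_cases hP : ∃ m, i ∈ Tstar m ∧ ∀ k ∈ Tstar m, ω k = true
  · rw [if_pos hP]
    by_cases hω : ∀ k ∈ Tstar j' \ Tstar j, ω k = true
    · -- old event implies new event
      have hP' : ∃ m, i ∈ T' m ∧ ∀ k ∈ T' m, ω k = true := by
        obtain ⟨m, him, hneg⟩ := hP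
        by_cases hm : m = j
        · subst hm
          by_cases hij' : i ∈ Tstar j'
          · refine ⟨j', ?_, ?_⟩
            · rw [hT', Function.update_of_ne hne']; exact hij'
            · intro k hk
              rw [hT', Function.update_of_ne hne'] at hk
              by_cases hkj : k ∈ Tstar m
              · exact hneg k hkj
              · exact hω k (Finset.mem_sdiff.mpr ⟨hk, hkj⟩)
          · refine ⟨m, ?_, ?_⟩
            · rw [hT', Function.update_self]
              exact Finset.mem_sdiff.mpr ⟨him, hij'⟩
            · intro k hk
              rw [hT', Function.update_self] at hk
              exact hneg k (Finset.mem_sdiff.mp hk).1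
        · refine ⟨m, ?_, ?_⟩
          · rw [hT', Function.update_of_ne hm]; exact him
          · intro k hk
            rw [hT', Function.update_of_ne hm] at hk
            exact hneg k hk
      rw [if_pos hP']
    · -- realization has probability zero
      push_neg at hω
      obtain ⟨k, hk, hωk⟩ := hω
      have hzero : healthProb q ω = 0 := by
        apply Finset.prod_eq_zero (Finset.mem_univ k)
        have : ω k = false := by simpa using hωk
        simp [this, hsure k hk]
      rw [hzero]
      split <;> simp
  · rw [if_neg hP]
    split
    · exact hprob_nonneg ω
    · exact le_refl 0
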